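/- For κ ≥ 1 and φ, λ > 0, the stationary empty-site fraction of the mean-field logistic IRP satisfies u_0 = (1/λ)·(1 + ∑_{i=1}^{κ-1} φ^i ∏_{j=1}^i (1 - j/κ))^{-1}, and as κ → ∞, u_0 converges monotonically (decreasing) to max(0, (1-φ)/λ). -/

import Mathlib

/-- Stationary empty-site fraction of the mean-field logistic IRP with cluster size `κ`:
`u₀ = (1/λ)·(1 + ∑_{i=1}^{κ-1} φ^i ∏_{j=1}^i (1 - j/κ))⁻¹`. -/
noncomputable def u0MF (lam phi : ℝ) (κ : ℕ) : ℝ :=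
  (1 / lam) *
    (1 + ∑ i ∈ Finset.Icc 1 (κ - 1), phi ^ i * ∏ j ∈ Finset.Icc 1 i, (1 - (j : ℝ) / κ))⁻¹

open Finset Filter

private lemma prodMF_nonneg {κ i : ℕ} (h : i < κ) :
    0 ≤ ∏ j ∈ Finset.Icc 1 i, (1 - (j : ℝ) / κ) := by
  apply Finset.prod_nonneg
  intro j hj
  rw [Finset.mem_Icc] at hj
  have hκ : (0 : ℝ) < κ := by exact_mod_cast (by omega : 0 < κ)
  have hjκ : (j : ℝ) ≤ κ := by exact_mod_cast (by omega : j ≤ κ)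
  have := (div_le_one hκ).mpr hjκ
  linarith

private lemma prodMF_le_one {κ i : ℕ} (h : i < κ) :
    ∏ j ∈ Finset.Icc 1 i, (1 - (j : ℝ) / κ) ≤ 1 := by
  apply Finset.prod_le_one
  · intro j hj
    rw [Finset.mem_Icc] at hj
    have hκ : (0 : ℝ) < κ := by exact_mod_cast (by omega : 0 < κ)
    have hjκ : (j : ℝ) ≤ κ := by exact_mod_cast (by omega : j ≤ κ)
    have := (div_le_one hκ).mpr hjκ
    linarith
  · intro j hj
    have hκ : (0 : ℝ) ≤ κ := by positivity
    have : (0 : ℝ) ≤ (j : ℝ) / κ := by positivity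
    linarith

private noncomputable def SMF (phi : ℝ) (κ : ℕ) : ℝ :=
  ∑ i ∈ Finset.Icc 1 (κ - 1), phi ^ i * ∏ j ∈ Finset.Icc 1 i, (1 - (j : ℝ) / κ)

private lemma u0MF_eq (lam phi : ℝ) (κ : ℕ) :
    u0MF lam phi κ = (1 / lam) * (1 + SMF phi κ)⁻¹ := rfl

private lemma SMF_nonneg {phi : ℝ} (hphi : 0 ≤ phi) (κ : ℕ) : 0 ≤ SMF phi κ := by
  apply Finset.sum_nonneg
  intro i hi
  rw [Finset.mem_Icc] at hi
  exact mul_nonneg (pow_nonneg hphi i) (prodMF_nonneg (by omega))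

private lemma SMF_mono {phi : ℝ} (hphi : 0 ≤ phi) : Monotone (SMF phi) := by
  intro κ₁ κ₂ h
  calc SMF phi κ₁
      ≤ ∑ i ∈ Finset.Icc 1 (κ₁ - 1), phi ^ i * ∏ j ∈ Finset.Icc 1 i, (1 - (j : ℝ) / κ₂) := by
        apply Finset.sum_le_sum
        intro i hi
        rw [Finset.mem_Icc] at hi
        have hi' : i < κ₁ := by omega
        apply mul_le_mul_of_nonneg_left _ (pow_nonneg hphi i)
        apply Finset.prod_le_prod
        · intro j hj
          rw [Finset.mem_Icc] at hj
          have hκ : (0 : ℝ) < κ₁ := by exact_mod_cast (by omega : 0 < κ₁)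
          have hjκ : (j : ℝ) ≤ κ₁ := by exact_mod_cast (by omega : j ≤ κ₁)
          have := (div_le_one hκ).mpr hjκ
          linarith
        · intro j hj
          rw [Finset.mem_Icc] at hj
          have hκ : (0 : ℝ) < κ₁ := by exact_mod_cast (by omega : 0 < κ₁)
          have hκ2 : (κ₁ : ℝ) ≤ κ₂ := by exact_mod_cast h
          have : (j : ℝ) / κ₂ ≤ (j : ℝ) / κ₁ := by
            apply div_le_div_of_nonneg_left (by positivity) hκ hκ2
          linarith
    _ ≤ SMF phi κ₂ := by
        apply Finset.sum_le_sum_of_subset_of_nonneg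
          (Finset.Icc_subset_Icc_right (by omega))
        intro i hi _
        rw [Finset.mem_Icc] at hi
        exact mul_nonneg (pow_nonneg hphi i) (prodMF_nonneg (by omega))

private lemma u0MF_anti {lam phi : ℝ} (hlam : 0 < lam) (hphi : 0 ≤ phi) :
    Antitone (u0MF lam phi) := by
  intro κ₁ κ₂ h
  rw [u0MF_eq, u0MF_eq]
  have h1 : (0 : ℝ) < 1 + SMF phi κ₁ := by linarith [SMF_nonneg hphi κ₁]
  have h2 : 1 + SMF phi κ₁ ≤ 1 + SMF phi κ₂ := by linarith [SMF_mono hphi h]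
  have := inv_anti₀ h1 h2
  have hl : (0 : ℝ) ≤ 1 / lam := by positivity
  exact mul_le_mul_of_nonneg_left this hl

private lemma geom_insert (phi : ℝ) (m : ℕ) :
    1 + ∑ i ∈ Finset.Icc 1 m, phi ^ i = ∑ i ∈ Finset.range (m + 1), phi ^ i := by
  have h : Finset.range (m + 1) = insert 0 (Finset.Icc 1 m) := by
    ext x
    simp only [Finset.mem_range, Finset.mem_insert, Finset.mem_Icc]
    omega
  rw [h, Finset.sum_insert (by simp)]
  simp

private lemma le_u0MF {lam phi : ℝ} (hlam : 0 < lam) (hphi : 0 < phi) (κ : ℕ) :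
    max 0 ((1 - phi) / lam) ≤ u0MF lam phi κ := by
  have hS0 : 0 ≤ SMF phi κ := SMF_nonneg hphi.le κ
  have hpos : (0 : ℝ) < 1 + SMF phi κ := by linarith
  have h0 : (0 : ℝ) ≤ u0MF lam phi κ := by
    rw [u0MF_eq]; positivity
  apply max_le h0
  rcases le_or_gt 1 phi with h1 | h1
  · have : (1 - phi) / lam ≤ 0 :=
      div_nonpos_iff.mpr (Or.inr ⟨by linarith, hlam.le⟩)
    linarith
  · -- phi < 1
    have hSle : SMF phi κ ≤ ∑ i ∈ Finset.Icc 1 (κ - 1), phi ^ i := by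
      apply Finset.sum_le_sum
      intro i hi
      rw [Finset.mem_Icc] at hi
      have := prodMF_le_one (κ := κ) (i := i) (by omega)
      have hp : (0 : ℝ) ≤ phi ^ i := pow_nonneg hphi.le i
      nlinarith
    have hgeom : ∑ i ∈ Finset.range (κ - 1 + 1), phi ^ i ≤ (1 - phi)⁻¹ := by
      have hsummable := (hasSum_geometric_of_lt_one hphi.le h1).summable
      have := Summable.sum_le_tsum (Finset.range (κ - 1 + 1))
        (fun i _ => pow_nonneg hphi.le i) hsummable
      rwa [tsum_geometric_of_lt_one hphi.le h1] at this
    have hle : 1 + SMF phi κ ≤ (1 - phi)⁻¹ := by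
      rw [← geom_insert] at hgeom
      linarith
    have hsub : (0 : ℝ) < 1 - phi := by linarith
    have hinv : 1 - phi ≤ (1 + SMF phi κ)⁻¹ := by
      have := inv_anti₀ hpos hle
      rwa [inv_inv] at this
    rw [u0MF_eq]
    calc (1 - phi) / lam = (1 / lam) * (1 - phi) := by ring
      _ ≤ (1 / lam) * (1 + SMF phi κ)⁻¹ :=
        mul_le_mul_of_nonneg_left hinv (by positivity)

private lemma tendsto_sumN (phi : ℝ) (N : ℕ) :
    Filter.Tendsto
      (fun κ : ℕ => ∑ i ∈ Finset.Icc 1 N, phi ^ i * ∏ j ∈ Finset.Icc 1 i, (1 - (j : ℝ) / κ))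
      Filter.atTop (nhds (∑ i ∈ Finset.Icc 1 N, phi ^ i)) := by
  apply tendsto_finset_sum
  intro i _
  have hp : Filter.Tendsto (fun κ : ℕ => ∏ j ∈ Finset.Icc 1 i, (1 - (j : ℝ) / κ))
      Filter.atTop (nhds (∏ j ∈ Finset.Icc 1 i, (1 : ℝ))) := by
    apply tendsto_finset_prod
    intro j _
    simpa using tendsto_const_nhds.sub (tendsto_const_div_atTop_nhds_zero_nat (j : ℝ))
  simpa using tendsto_const_nhds.mul hp

private lemma tendsto_gN {lam phi : ℝ} (hphi : 0 ≤ phi) (N : ℕ) :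
    Filter.Tendsto
      (fun κ : ℕ => (1 / lam) *
        (1 + ∑ i ∈ Finset.Icc 1 N, phi ^ i * ∏ j ∈ Finset.Icc 1 i, (1 - (j : ℝ) / κ))⁻¹)
      Filter.atTop (nhds ((1 / lam) * (1 + ∑ i ∈ Finset.Icc 1 N, phi ^ i)⁻¹)) := by
  have hs : (0 : ℝ) ≤ ∑ i ∈ Finset.Icc 1 N, phi ^ i :=
    Finset.sum_nonneg fun i _ => pow_nonneg hphi i
  have h0 : (1 + ∑ i ∈ Finset.Icc 1 N, phi ^ i) ≠ 0 := by linarith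
  exact tendsto_const_nhds.mul ((tendsto_const_nhds.add (tendsto_sumN phi N)).inv₀ h0)

private lemma u0MF_le_g {lam phi : ℝ} (hlam : 0 < lam) (hphi : 0 ≤ phi) {N κ : ℕ}
    (h : N + 1 ≤ κ) :
    u0MF lam phi κ ≤ (1 / lam) *
      (1 + ∑ i ∈ Finset.Icc 1 N, phi ^ i * ∏ j ∈ Finset.Icc 1 i, (1 - (j : ℝ) / κ))⁻¹ := by
  rw [u0MF_eq]
  have hterm : ∀ i ∈ Finset.Icc 1 N,
      0 ≤ phi ^ i * ∏ j ∈ Finset.Icc 1 i, (1 - (j : ℝ) / κ) := by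
    intro i hi
    rw [Finset.mem_Icc] at hi
    exact mul_nonneg (pow_nonneg hphi i) (prodMF_nonneg (by omega))
  have hpos : (0 : ℝ) < 1 + ∑ i ∈ Finset.Icc 1 N, phi ^ i * ∏ j ∈ Finset.Icc 1 i, (1 - (j : ℝ) / κ) := by
    have := Finset.sum_nonneg hterm
    linarith
  have hle : ∑ i ∈ Finset.Icc 1 N, phi ^ i * ∏ j ∈ Finset.Icc 1 i, (1 - (j : ℝ) / κ)
      ≤ SMF phi κ := by
    apply Finset.sum_le_sum_of_subset_of_nonneg (Finset.Icc_subset_Icc_right (by omega))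
    intro i hi _
    rw [Finset.mem_Icc] at hi
    exact mul_nonneg (pow_nonneg hphi i) (prodMF_nonneg (by omega))
  have := inv_anti₀ hpos (by linarith : 1 + ∑ i ∈ Finset.Icc 1 N, phi ^ i * ∏ j ∈ Finset.Icc 1 i, (1 - (j : ℝ) / κ) ≤ 1 + SMF phi κ)
  exact mul_le_mul_of_nonneg_left this (by positivity)

private lemma tendsto_cN {lam phi : ℝ} (hlam : 0 < lam) (hphi : 0 < phi) :
    Filter.Tendsto (fun N : ℕ => (1 / lam) * (1 + ∑ i ∈ Finset.Icc 1 N, phi ^ i)⁻¹)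
      Filter.atTop (nhds (max 0 ((1 - phi) / lam))) := by
  rcases lt_or_ge phi 1 with h1 | h1
  · have hmax : max 0 ((1 - phi) / lam) = (1 - phi) / lam :=
      max_eq_right (div_nonneg (by linarith) hlam.le)
    rw [hmax]
    have hgeom : Filter.Tendsto (fun n : ℕ => ∑ i ∈ Finset.range n, phi ^ i)
        Filter.atTop (nhds (1 - phi)⁻¹) :=
      (hasSum_geometric_of_lt_one hphi.le h1).tendsto_sum_nat
    have h2 : Filter.Tendsto (fun N : ℕ => (1 : ℝ) + ∑ i ∈ Finset.Icc 1 N, phi ^ i)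
        Filter.atTop (nhds (1 - phi)⁻¹) := by
      have := hgeom.comp (tendsto_add_atTop_nat 1)
      simpa [Function.comp_def, geom_insert] using this
    have hne : ((1 : ℝ) - phi)⁻¹ ≠ 0 := inv_ne_zero (by linarith)
    have h3 := h2.inv₀ hne
    rw [inv_inv] at h3
    have h4 := h3.const_mul (1 / lam)
    have : (1 / lam) * (1 - phi) = (1 - phi) / lam := by ring
    rwa [this] at h4
  · have hmax : max 0 ((1 - phi) / lam) = 0 :=
      max_eq_left (div_nonpos_iff.mpr (Or.inr ⟨by linarith, hlam.le⟩))
    rw [hmax]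
    apply squeeze_zero
    · intro N
      have hs : (0 : ℝ) ≤ ∑ i ∈ Finset.Icc 1 N, phi ^ i :=
        Finset.sum_nonneg fun i _ => pow_nonneg hphi.le i
      have : (0 : ℝ) < 1 + ∑ i ∈ Finset.Icc 1 N, phi ^ i := by linarith
      positivity
    · intro N
      show (1 / lam) * (1 + ∑ i ∈ Finset.Icc 1 N, phi ^ i)⁻¹ ≤ (1 / lam) * ((N : ℝ) + 1)⁻¹
      have hNs : (N : ℝ) ≤ ∑ i ∈ Finset.Icc 1 N, phi ^ i := by
        have := Finset.sum_le_sum (f := fun _ : ℕ => (1 : ℝ)) (g := fun i => phi ^ i)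
          (s := Finset.Icc 1 N) (fun i _ => one_le_pow₀ h1)
        simpa [Nat.card_Icc] using this
      have hpos : (0 : ℝ) < (N : ℝ) + 1 := by positivity
      have hA : ((N : ℝ) + 1) ≤ 1 + ∑ i ∈ Finset.Icc 1 N, phi ^ i := by linarith
      have := inv_anti₀ hpos hA
      exact mul_le_mul_of_nonneg_left this (by positivity)
    · have : Filter.Tendsto (fun N : ℕ => ((N : ℝ) + 1)⁻¹) Filter.atTop (nhds 0) := by
        simpa [one_div] using tendsto_one_div_add_atTop_nhds_zero_nat (𝕜 := ℝ)
      simpa using this.const_mul (1 / lam)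

/-- The map `κ ↦ u₀(κ)` is nonincreasing (for `κ ≥ 1`) and converges, as `κ → ∞`,
to `max(0, (1-φ)/λ)`. -/
theorem stmt4 (lam phi : ℝ) (hlam : 0 < lam) (hphi : 0 < phi) :
    (∀ κ₁ κ₂ : ℕ, 1 ≤ κ₁ → κ₁ ≤ κ₂ → u0MF lam phi κ₂ ≤ u0MF lam phi κ₁) ∧
    Filter.Tendsto (u0MF lam phi) Filter.atTop (nhds (max 0 ((1 - phi) / lam))) := by
  constructor
  · intro κ₁ κ₂ _ h
    exact u0MF_anti hlam hphi.le h
  · rw [Metric.tendsto_atTop]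
    intro ε hε
    set L := max 0 ((1 - phi) / lam) with hLdef
    obtain ⟨N, hN⟩ := Metric.tendsto_atTop.mp (tendsto_cN hlam hphi) (ε / 2) (by positivity)
    have hcN := hN N le_rfl
    obtain ⟨M, hM⟩ := Metric.tendsto_atTop.mp (tendsto_gN (lam := lam) hphi.le N) (ε / 2)
      (by positivity)
    refine ⟨max M (N + 1), fun n hn => ?_⟩
    have hn1 : M ≤ n := le_trans (le_max_left _ _) hn
    have hn2 : N + 1 ≤ n := le_trans (le_max_right _ _) hn
    have hub := u0MF_le_g hlam hphi.le hn2 (lam := lam)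
    have hlb := le_u0MF hlam hphi n
    have hg := hM n hn1
    rw [Real.dist_eq] at hg hcN ⊢
    have h1 : u0MF lam phi n - L ≤
        ((1 / lam) * (1 + ∑ i ∈ Finset.Icc 1 N, phi ^ i * ∏ j ∈ Finset.Icc 1 i, (1 - (j : ℝ) / n))⁻¹
          - (1 / lam) * (1 + ∑ i ∈ Finset.Icc 1 N, phi ^ i)⁻¹)
        + ((1 / lam) * (1 + ∑ i ∈ Finset.Icc 1 N, phi ^ i)⁻¹ - L) := by linarith
    have h2 := abs_lt.mp hg
    have h3 := abs_lt.mp hcN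
    rw [abs_lt]
    constructor <;> [linarith; linarith]
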